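/- Let Ŷ ∈ {−1,+1}^V maximize Σ_{uv∈E} X_uv·Y_u·Y_v over all Y ∈ {−1,+1}^V on the n×n grid graph, let B = {v ∈ V : Ŷ_v ≠ y_v}, and suppose no connected component of G[B] is of type 6. Then the Hamming error |B| is at most Σ_{F ∈ ℱ, F bad} |F|, i.e. the total number of vertices, counted over all bad sets F in the family ℱ. -/

import Mathlib

open Finset
open scoped Classical

def IsSign (x : ℤ) : Prop := x = 1 ∨ x = -1

def gridGraph (n : ℕ) : SimpleGraph (Fin n × Fin n) where
  Adj u v := (u.1 = v.1 ∧ Nat.dist u.2.val v.2.val = 1) ∨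
    (u.2 = v.2 ∧ Nat.dist u.1.val v.1.val = 1)
  symm := by
    constructor
    intro u v h
    rcases h with ⟨h1, h2⟩ | ⟨h1, h2⟩
    · exact Or.inl ⟨h1.symm, by rwa [Nat.dist_comm]⟩
    · exact Or.inr ⟨h1.symm, by rwa [Nat.dist_comm]⟩
  loopless := by
    constructor
    intro u h
    rcases h with ⟨_, h2⟩ | ⟨_, h2⟩ <;> simp [Nat.dist_self] at h2

instance (n : ℕ) : DecidableRel (gridGraph n).Adj := fun u v =>
  inferInstanceAs (Decidable ((u.1 = v.1 ∧ Nat.dist u.2.val v.2.val = 1) ∨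
    (u.2 = v.2 ∧ Nat.dist u.1.val v.1.val = 1)))

def pairProd {V : Type*} (y : V → ℤ) : Sym2 V → ℤ :=
  Sym2.lift ⟨fun u v => y u * y v, fun u v => mul_comm (y u) (y v)⟩

/-- The boundary `δ(S)`: edges of `G` with exactly one endpoint in `S`. -/
noncomputable def bdry {V : Type*} [Fintype V] [DecidableEq V] (G : SimpleGraph V)
    [DecidableRel G.Adj] (S : Finset V) : Finset (Sym2 V) :=
  G.edgeFinset.filter fun e => ∃ u v : V, e = s(u, v) ∧ u ∈ S ∧ v ∉ S

def Maximizes {V : Type*} [Fintype V] [DecidableEq V] (G : SimpleGraph V)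
    [DecidableRel G.Adj] (X : Sym2 V → ℤ) (Yh : V → ℤ) : Prop :=
  (∀ v, IsSign (Yh v)) ∧
  ∀ Y : V → ℤ, (∀ v, IsSign (Y v)) →
    (∑ e ∈ G.edgeFinset, X e * pairProd Y e) ≤ ∑ e ∈ G.edgeFinset, X e * pairProd Yh e

def Type6 (n : ℕ) (S : Finset (Fin n × Fin n)) : Prop :=
  (∃ v ∈ S, v.1.val = 0) ∧ (∃ v ∈ S, v.1.val = n - 1) ∧
  (∃ v ∈ S, v.2.val = 0) ∧ (∃ v ∈ S, v.2.val = n - 1)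

def IsCompOf {V : Type*} [Fintype V] [DecidableEq V] (G : SimpleGraph V)
    (C W : Finset V) : Prop :=
  C ⊆ W ∧ (G.induce (C : Set V)).Connected ∧
  ∀ u ∈ C, ∀ v ∈ W, G.Adj u v → v ∈ C

/-- `F` belongs to the family `ℱ` of nonempty proper subsets of the `n × n` grid such that
both `G[F]` and `G[V ∖ F]` are connected and `F` is not of type 6.  (Connectedness in
Mathlib includes nonemptiness, so `F` is nonempty and `F ⊊ V`.) -/
def InFamily (n : ℕ) (F : Finset (Fin n × Fin n)) : Prop :=
  ((gridGraph n).induce (F : Set (Fin n × Fin n))).Connected ∧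
  ((gridGraph n).induce ((↑F : Set (Fin n × Fin n))ᶜ)).Connected ∧
  ¬ Type6 n F

/-- `S` is bad for observations `X` and ground truth `y`: at least half the edges of
`δ(S)` are inconsistent with the ground truth. -/
def IsBad (n : ℕ) (y : Fin n × Fin n → ℤ) (X : Sym2 (Fin n × Fin n) → ℤ)
    (S : Finset (Fin n × Fin n)) : Prop :=
  (bdry (gridGraph n) S).card ≤
    2 * ((bdry (gridGraph n) S).filter fun e => X e ≠ pairProd y e).card

section Helpers

variable {n : ℕ}

/-- One-step relation within a finset `S`. -/
def Step (n : ℕ) (S : Finset (Fin n × Fin n)) (a b : Fin n × Fin n) : Prop :=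
  a ∈ S ∧ b ∈ S ∧ (gridGraph n).Adj a b

/-- Reachability within `S`. -/
def Rch (n : ℕ) (S : Finset (Fin n × Fin n)) : Fin n × Fin n → Fin n × Fin n → Prop :=
  Relation.ReflTransGen (Step n S)

lemma Step.symm' {S : Finset (Fin n × Fin n)} {a b} (h : Step n S a b) : Step n S b a :=
  ⟨h.2.1, h.1, h.2.2.symm⟩

lemma Rch.symm' {S : Finset (Fin n × Fin n)} {a b} (h : Rch n S a b) : Rch n S b a :=
  by haveI : Std.Symm (Step n S) := ⟨fun _ _ hs => Step.symm' hs⟩; exact Std.Symm.symm (r := Relation.ReflTransGen (Step n S)) _ _ h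

lemma Rch.mono' {S T : Finset (Fin n × Fin n)} (hST : S ⊆ T) {a b} (h : Rch n S a b) :
    Rch n T a b :=
  Relation.ReflTransGen.mono (fun _ _ hs => ⟨hST hs.1, hST hs.2.1, hs.2.2⟩) _ _ h

lemma Rch.mem_right {S : Finset (Fin n × Fin n)} {a b} (ha : a ∈ S) (h : Rch n S a b) :
    b ∈ S := by
  induction h with
  | refl => exact ha
  | tail _ hs _ => exact hs.2.1

/-- The connected component of `v` inside `S`. -/
noncomputable def comp (n : ℕ) (S : Finset (Fin n × Fin n)) (v : Fin n × Fin n) :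
    Finset (Fin n × Fin n) :=
  S.filter (fun u => Rch n S v u)

lemma comp_subset {S : Finset (Fin n × Fin n)} {v} : comp n S v ⊆ S :=
  Finset.filter_subset _ _

lemma mem_comp_self {S : Finset (Fin n × Fin n)} {v} (hv : v ∈ S) : v ∈ comp n S v :=
  Finset.mem_filter.2 ⟨hv, Relation.ReflTransGen.refl⟩

lemma comp_closed {S : Finset (Fin n × Fin n)} {v u w} (hu : u ∈ comp n S v)
    (hw : w ∈ S) (hadj : (gridGraph n).Adj u w) : w ∈ comp n S v := by
  rcases Finset.mem_filter.1 hu with ⟨huS, hR⟩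
  exact Finset.mem_filter.2 ⟨hw, hR.tail ⟨huS, hw, hadj⟩⟩

lemma rch_comp_hub {S : Finset (Fin n × Fin n)} {v u} (hu : u ∈ comp n S v) :
    Rch n (comp n S v) v u := by
  rcases Finset.mem_filter.1 hu with ⟨_, hR⟩
  clear hu
  induction hR with
  | refl => exact Relation.ReflTransGen.refl
  | @tail b c hvb hs ih =>
    have hb : b ∈ comp n S v := Finset.mem_filter.2 ⟨hs.1, hvb⟩
    have hc : c ∈ comp n S v := Finset.mem_filter.2 ⟨hs.2.1, hvb.tail hs⟩
    exact (ih hs.1).tail ⟨hb, hc, hs.2.2⟩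

lemma comp_eq_of_mem {S : Finset (Fin n × Fin n)} {v u} (hv : v ∈ S)
    (hu : u ∈ comp n S v) : comp n S u = comp n S v := by
  rcases Finset.mem_filter.1 hu with ⟨huS, hR⟩
  ext x
  simp only [comp, Finset.mem_filter]
  exact ⟨fun ⟨hx, h⟩ => ⟨hx, hR.trans h⟩, fun ⟨hx, h⟩ => ⟨hx, (Rch.symm' hR).trans h⟩⟩

/-- Reachability in `S` gives reachability in the induced graph. -/
lemma reachable_of_rch {S : Finset (Fin n × Fin n)} {v u} (hv : v ∈ S) (h : Rch n S v u) :
    ∀ (hu : u ∈ S), ((gridGraph n).induce (S : Set (Fin n × Fin n))).Reachable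
      ⟨v, by simpa using hv⟩ ⟨u, by simpa using hu⟩ := by
  induction h with
  | refl => intro _; rfl
  | @tail b c hvb hs ih =>
    intro hc
    have hb : b ∈ S := hs.1
    exact (ih hb).trans (SimpleGraph.Adj.reachable (by exact hs.2.2))

lemma connected_of_hub {S : Finset (Fin n × Fin n)} {v} (hv : v ∈ S)
    (h : ∀ u ∈ S, Rch n S v u) :
    ((gridGraph n).induce (S : Set (Fin n × Fin n))).Connected := by
  haveI : Nonempty (S : Set (Fin n × Fin n)) := ⟨⟨v, by simpa using hv⟩⟩
  refine ⟨fun a b => ?_⟩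
  have ha := a.2; have hb := b.2
  have ra := reachable_of_rch hv (h a (by simpa using ha)) (by simpa using ha)
  have rb := reachable_of_rch hv (h b (by simpa using hb)) (by simpa using hb)
  exact ra.symm.trans rb

end Helpers
section Grid

variable {n : ℕ}

lemma adj_row {a : Fin n} {b b' : Fin n} (h : Nat.dist b.val b'.val = 1) :
    (gridGraph n).Adj (a, b) (a, b') := Or.inl ⟨rfl, h⟩

lemma adj_col {b : Fin n} {a a' : Fin n} (h : Nat.dist a.val a'.val = 1) :
    (gridGraph n).Adj (a, b) (a', b) := Or.inr ⟨rfl, h⟩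

lemma dist_succ (m : ℕ) : Nat.dist m (m + 1) = 1 := by
  simp [Nat.dist]

lemma rowR {S : Finset (Fin n × Fin n)} {a : Fin n} (hmem : ∀ j, (a, j) ∈ S)
    (b b' : Fin n) : Rch n S (a, b) (a, b') := by
  have key : ∀ m (hm : m < n), Rch n S (a, ⟨0, Nat.lt_of_le_of_lt (Nat.zero_le m) hm⟩) (a, ⟨m, hm⟩) := by
    intro m
    induction m with
    | zero => intro hm; exact Relation.ReflTransGen.refl
    | succ k ih =>
      intro hm
      have hk : k < n := Nat.lt_of_succ_lt hm
      exact (ih hk).tail ⟨hmem _, hmem _, adj_row (by simpa using dist_succ k)⟩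
  have h1 := key b.val b.isLt
  have h2 := key b'.val b'.isLt
  have hb : (⟨b.val, b.isLt⟩ : Fin n) = b := rfl
  have hb' : (⟨b'.val, b'.isLt⟩ : Fin n) = b' := rfl
  rw [hb] at h1; rw [hb'] at h2
  exact (Rch.symm' h1).trans h2

lemma colR {S : Finset (Fin n × Fin n)} {b : Fin n} (hmem : ∀ i, (i, b) ∈ S)
    (a a' : Fin n) : Rch n S (a, b) (a', b) := by
  have key : ∀ m (hm : m < n), Rch n S (⟨0, Nat.lt_of_le_of_lt (Nat.zero_le m) hm⟩, b) (⟨m, hm⟩, b) := by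
    intro m
    induction m with
    | zero => intro hm; exact Relation.ReflTransGen.refl
    | succ k ih =>
      intro hm
      have hk : k < n := Nat.lt_of_succ_lt hm
      exact (ih hk).tail ⟨hmem _, hmem _, adj_col (by simpa using dist_succ k)⟩
  have h1 := key a.val a.isLt
  have h2 := key a'.val a'.isLt
  have ha : (⟨a.val, a.isLt⟩ : Fin n) = a := rfl
  have ha' : (⟨a'.val, a'.isLt⟩ : Fin n) = a' := rfl
  rw [ha] at h1; rw [ha'] at h2
  exact (Rch.symm' h1).trans h2

lemma gridConn (u w : Fin n × Fin n) : Rch n Finset.univ u w := by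
  obtain ⟨a, b⟩ := u; obtain ⟨a', b'⟩ := w
  exact (colR (fun _ => Finset.mem_univ _) a a').trans (rowR (fun _ => Finset.mem_univ _) b b')

lemma mem_of_closed {S : Finset (Fin n × Fin n)} {u w}
    (hcl : ∀ a ∈ S, ∀ b, (gridGraph n).Adj a b → b ∈ S) (hu : u ∈ S) : w ∈ S := by
  have h := gridConn (n := n) u w
  induction h with
  | refl => exact hu
  | tail _ hs ih => exact hcl _ ih _ hs.2.2

/-- The four sides of the grid. -/
def sideP (n : ℕ) (k : Fin 4) (v : Fin n × Fin n) : Prop :=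
  if k = 0 then v.1.val = 0 else if k = 1 then v.1.val = n - 1
  else if k = 2 then v.2.val = 0 else v.2.val = n - 1

lemma type6_iff {S : Finset (Fin n × Fin n)} :
    Type6 n S ↔ ∀ k, ∃ v ∈ S, sideP n k v := by
  constructor
  · rintro ⟨h0, h1, h2, h3⟩ k
    fin_cases k
    · exact h0.imp (fun v hv => ⟨hv.1, hv.2⟩)
    · exact h1.imp (fun v hv => ⟨hv.1, hv.2⟩)
    · exact h2.imp (fun v hv => ⟨hv.1, hv.2⟩)
    · exact h3.imp (fun v hv => ⟨hv.1, hv.2⟩)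
  · intro h
    exact ⟨(h 0).imp (fun v hv => ⟨hv.1, hv.2⟩), (h 1).imp (fun v hv => ⟨hv.1, hv.2⟩),
      (h 2).imp (fun v hv => ⟨hv.1, hv.2⟩), (h 3).imp (fun v hv => ⟨hv.1, hv.2⟩)⟩

/-- A base point on side `k`. -/
def wpt (n : ℕ) (hn : 0 < n) (k : Fin 4) : Fin n × Fin n :=
  if k = 0 then (⟨0, hn⟩, ⟨0, hn⟩) else if k = 1 then (⟨n - 1, Nat.sub_lt hn one_pos⟩, ⟨0, hn⟩)
  else if k = 2 then (⟨0, hn⟩, ⟨0, hn⟩) else (⟨0, hn⟩, ⟨n - 1, Nat.sub_lt hn one_pos⟩)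

lemma sideP_wpt (hn : 0 < n) (k : Fin 4) : sideP n k (wpt n hn k) := by
  fin_cases k <;> simp [sideP, wpt]

lemma side_conn {S : Finset (Fin n × Fin n)} {k : Fin 4}
    (hmem : ∀ x, sideP n k x → x ∈ S) {u u'} (hu : sideP n k u) (hu' : sideP n k u') :
    Rch n S u u' := by
  obtain ⟨a, b⟩ := u; obtain ⟨a', b'⟩ := u'
  fin_cases k
  · simp only [sideP, if_pos] at hu hu'
    have ha : a = a' := Fin.ext (hu.trans hu'.symm)
    subst ha
    exact rowR (fun j => hmem _ (by simpa [sideP] using hu)) b b'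
  · simp only [sideP, show (1 : Fin 4) ≠ 0 by decide, if_neg, if_pos, reduceIte] at hu hu'
    have ha : a = a' := Fin.ext (hu.trans hu'.symm)
    subst ha
    exact rowR (fun j => hmem _ (by simp [sideP]; exact hu)) b b'
  · simp only [sideP, reduceIte] at hu hu'
    have hb : b = b' := Fin.ext (hu.trans hu'.symm)
    subst hb
    exact colR (fun i => hmem _ (by simp [sideP]; exact hu)) a a'
  · simp only [sideP, reduceIte] at hu hu'
    have hb : b = b' := Fin.ext (hu.trans hu'.symm)
    subst hb
    exact colR (fun i => hmem _ (by simp [sideP]; exact hu)) a a'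

lemma not_type6_elim {S : Finset (Fin n × Fin n)} (h : ¬ Type6 n S) :
    ∃ k : Fin 4, ∀ v ∈ S, ¬ sideP n k v := by
  by_contra hc
  push_neg at hc
  exact h (type6_iff.2 (fun k => by obtain ⟨v, hv, hs⟩ := hc k; exact ⟨v, hv, hs⟩))

end Grid
section Bad

variable {n : ℕ}

lemma mem_bdry_iff {S : Finset (Fin n × Fin n)} {e : Sym2 (Fin n × Fin n)} :
    e ∈ bdry (gridGraph n) S ↔
      ∃ a b, (gridGraph n).Adj a b ∧ e = s(a, b) ∧ a ∈ S ∧ b ∉ S := by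
  constructor
  · intro h
    rcases Finset.mem_filter.1 h with ⟨he, a, b, hab, haS, hbS⟩
    refine ⟨a, b, ?_, hab, haS, hbS⟩
    have := SimpleGraph.mem_edgeFinset.1 he
    rw [hab] at this
    exact this
  · rintro ⟨a, b, hadj, rfl, haS, hbS⟩
    exact Finset.mem_filter.2 ⟨SimpleGraph.mem_edgeFinset.2 hadj, a, b, rfl, haS, hbS⟩

lemma pairProd_mk (y : Fin n × Fin n → ℤ) (a b : Fin n × Fin n) :
    pairProd y s(a, b) = y a * y b := rfl

lemma sign_mul_sign {s t : ℤ} (hs : IsSign s) (ht : IsSign t) :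
    s * t = if s ≠ t then -1 else 1 := by
  rcases hs with rfl | rfl <;> rcases ht with rfl | rfl <;> norm_num

lemma isSign_neg {s : ℤ} (hs : IsSign s) : IsSign (-s) := by
  rcases hs with rfl | rfl
  · exact Or.inr rfl
  · exact Or.inl (by norm_num)

lemma bad_of_flip (y : Fin n × Fin n → ℤ) (hy : ∀ v, IsSign (y v))
    (X : Sym2 (Fin n × Fin n) → ℤ) (hX : ∀ e ∈ (gridGraph n).edgeFinset, IsSign (X e))
    (Yh : Fin n × Fin n → ℤ) (hmax : Maximizes (gridGraph n) X Yh)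
    (F : Finset (Fin n × Fin n))
    (hFB : ∀ a b, (gridGraph n).Adj a b → a ∈ F → b ∉ F → Yh a = - y a ∧ Yh b = y b) :
    IsBad n y X F := by
  classical
  set G := gridGraph n
  set T := bdry G F with hT
  have hTE : T ⊆ G.edgeFinset := Finset.filter_subset _ _
  set Y' : Fin n × Fin n → ℤ := fun u => if u ∈ F then -Yh u else Yh u with hY'def
  have hY' : ∀ v, IsSign (Y' v) := by
    intro v
    simp only [hY'def]
    split
    · exact isSign_neg (hmax.1 v)
    · exact hmax.1 v
  -- pairProd values
  have key1 : ∀ e ∈ G.edgeFinset, e ∉ T → pairProd Y' e = pairProd Yh e := by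
    intro e he hnT
    induction e using Sym2.ind with
    | _ a b =>
      have hadj : G.Adj a b := SimpleGraph.mem_edgeFinset.1 he
      have h1 : ¬ (a ∈ F ∧ b ∉ F) := fun ⟨h1, h2⟩ => hnT (mem_bdry_iff.2 ⟨a, b, hadj, rfl, h1, h2⟩)
      have h2 : ¬ (b ∈ F ∧ a ∉ F) := fun ⟨h1, h2⟩ =>
        hnT (mem_bdry_iff.2 ⟨b, a, hadj.symm, Sym2.eq_swap, h1, h2⟩)
      rw [pairProd_mk, pairProd_mk]
      by_cases ha : a ∈ F
      · have hb : b ∈ F := by by_contra hb; exact h1 ⟨ha, hb⟩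
        simp [hY'def, ha, hb]
      · have hb : b ∉ F := by intro hb; exact h2 ⟨hb, ha⟩
        simp [hY'def, ha, hb]
  have key2 : ∀ e ∈ T, pairProd Y' e = - pairProd Yh e := by
    intro e heT
    obtain ⟨a, b, hadj, rfl, haF, hbF⟩ := mem_bdry_iff.1 heT
    rw [pairProd_mk, pairProd_mk]
    simp [hY'def, haF, hbF]
  -- split the sums
  have hsd : ∑ e ∈ G.edgeFinset \ T, (X e * pairProd Y' e) + ∑ e ∈ T, (X e * pairProd Y' e)
      = ∑ e ∈ G.edgeFinset, (X e * pairProd Y' e) := Finset.sum_sdiff hTE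
  have hsd2 : ∑ e ∈ G.edgeFinset \ T, (X e * pairProd Yh e) + ∑ e ∈ T, (X e * pairProd Yh e)
      = ∑ e ∈ G.edgeFinset, (X e * pairProd Yh e) := Finset.sum_sdiff hTE
  have he1 : ∑ e ∈ G.edgeFinset \ T, (X e * pairProd Y' e)
      = ∑ e ∈ G.edgeFinset \ T, (X e * pairProd Yh e) := by
    refine Finset.sum_congr rfl (fun e he => ?_)
    rcases Finset.mem_sdiff.1 he with ⟨he1, he2⟩
    rw [key1 e he1 he2]
  have he2 : ∑ e ∈ T, (X e * pairProd Y' e) = - ∑ e ∈ T, (X e * pairProd Yh e) := by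
    rw [← Finset.sum_neg_distrib]
    refine Finset.sum_congr rfl (fun e he => ?_)
    rw [key2 e he]; ring
  have hle := hmax.2 Y' hY'
  have hpos : 0 ≤ ∑ e ∈ T, (X e * pairProd Yh e) := by
    have := hsd
    rw [he1, he2] at this
    linarith [hsd2, hle]
  -- relate to y
  have hyh : ∀ e ∈ T, X e * pairProd Yh e = - (X e * pairProd y e) := by
    intro e heT
    obtain ⟨a, b, hadj, rfl, haF, hbF⟩ := mem_bdry_iff.1 heT
    obtain ⟨h1, h2⟩ := hFB a b hadj haF hbF
    rw [pairProd_mk, pairProd_mk, h1, h2]; ring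
  have hneg : ∑ e ∈ T, (X e * pairProd y e) ≤ 0 := by
    have : ∑ e ∈ T, (X e * pairProd Yh e) = - ∑ e ∈ T, (X e * pairProd y e) := by
      rw [← Finset.sum_neg_distrib]
      exact Finset.sum_congr rfl hyh
    linarith [hpos, this]
  -- count bad edges
  have hsign : ∀ e ∈ T, X e * pairProd y e = if X e ≠ pairProd y e then -1 else 1 := by
    intro e heT
    have hXe := hX e (hTE heT)
    have hye : IsSign (pairProd y e) := by
      induction e using Sym2.ind with
      | _ a b =>
        rw [pairProd_mk]
        rcases hy a with h | h <;> rcases hy b with h' | h' <;> rw [h, h'] <;> norm_num [IsSign]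
    exact sign_mul_sign hXe hye
  set bad := T.filter (fun e => X e ≠ pairProd y e) with hbad
  have hcount : ∑ e ∈ T, (X e * pairProd y e)
      = (T.card : ℤ) - 2 * (bad.card : ℤ) := by
    rw [Finset.sum_congr rfl hsign]
    have h2 : ∀ e ∈ T, (if X e ≠ pairProd y e then (-1:ℤ) else 1)
        = 1 - 2 * (if X e ≠ pairProd y e then (1:ℤ) else 0) := by
      intro e _; split <;> ring
    rw [Finset.sum_congr rfl h2, Finset.sum_sub_distrib, Finset.sum_const, ← Finset.mul_sum,
      Finset.sum_boole]
    simp [hbad]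
  rw [hcount] at hneg
  have : (T.card : ℤ) ≤ 2 * (bad.card : ℤ) := by linarith
  exact_mod_cast this

end Bad
/-- if `Ŷ` maximizes the edge agreement, `B` is the set of mislabeled
vertices, and no connected component of `G[B]` is of type 6, then
`|B| ≤ ∑_{F ∈ ℱ, F bad} |F|`. -/
theorem hamming_le_sum_bad_filledIn (n : ℕ)
    (y : Fin n × Fin n → ℤ) (hy : ∀ v, IsSign (y v))
    (X : Sym2 (Fin n × Fin n) → ℤ) (hX : ∀ e ∈ (gridGraph n).edgeFinset, IsSign (X e))
    (Yh : Fin n × Fin n → ℤ) (hmax : Maximizes (gridGraph n) X Yh)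
    (B : Finset (Fin n × Fin n)) (hB : B = univ.filter fun v => Yh v ≠ y v)
    (hno6 : ∀ C, IsCompOf (gridGraph n) C B → ¬ Type6 n C) :
    B.card ≤ ∑ F ∈ univ.filter (fun F : Finset (Fin n × Fin n) =>
        InFamily n F ∧ IsBad n y X F), F.card := by
  classical
  rcases Finset.eq_empty_or_nonempty B with hBe | hBe
  · simp [hBe]
  obtain ⟨v₀, hv₀⟩ := hBe
  have hn : 0 < n := v₀.1.pos
  set 𝒞 := B.image (fun v => comp n B v) with h𝒞
  have hcompOf : ∀ C ∈ 𝒞, IsCompOf (gridGraph n) C B := by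
    intro C hC
    obtain ⟨v, hv, rfl⟩ := Finset.mem_image.1 hC
    exact ⟨comp_subset, connected_of_hub (mem_comp_self hv) (fun u hu => rch_comp_hub hu),
      fun u hu w hw hadj => comp_closed hu hw hadj⟩
  set Fof : Finset (Fin n × Fin n) → Finset (Fin n × Fin n) := fun C =>
    if h : ∃ k : Fin 4, ∀ v ∈ C, ¬ sideP n k v
    then Finset.univ \ comp n (Finset.univ \ C) (wpt n hn h.choose)
    else ∅ with hFof
  have main : ∀ C ∈ 𝒞, C ⊆ Fof C ∧ InFamily n (Fof C) ∧ IsBad n y X (Fof C) ∧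
      (∀ u x, (gridGraph n).Adj u x → u ∈ Fof C → x ∉ Fof C → u ∈ C) ∧
      (∃ a b, a ∈ C ∧ b ∉ Fof C ∧ (gridGraph n).Adj a b) := by
    intro C hC
    have hnot6 : ¬ Type6 n C := hno6 C (hcompOf C hC)
    have hex : ∃ k : Fin 4, ∀ v ∈ C, ¬ sideP n k v := not_type6_elim hnot6
    obtain ⟨v, hvB, hCv⟩ := Finset.mem_image.1 hC
    set k₀ := hex.choose with hk₀def
    have hk₀ : ∀ x ∈ C, ¬ sideP n k₀ x := hex.choose_spec
    set w := wpt n hn k₀ with hwdef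
    have hwside : sideP n k₀ w := sideP_wpt hn k₀
    have hwnotC : w ∉ C := fun h => hk₀ w h hwside
    have hwC : w ∈ Finset.univ \ C := Finset.mem_sdiff.2 ⟨Finset.mem_univ _, hwnotC⟩
    set D := comp n (Finset.univ \ C) w with hDdef
    have hFofC : Fof C = Finset.univ \ D := by
      rw [hFof]; exact dif_pos hex
    have hDsub : D ⊆ Finset.univ \ C := comp_subset
    have hCD : ∀ x ∈ C, x ∉ D := fun x hx hxD => (Finset.mem_sdiff.1 (hDsub hxD)).2 hx
    have hmemF : ∀ x, x ∈ Fof C ↔ x ∉ D := by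
      intro x; rw [hFofC]; simp
    have hCF : C ⊆ Fof C := fun x hx => (hmemF x).2 (hCD x hx)
    have hvC : v ∈ C := hCv ▸ mem_comp_self hvB
    -- hole lemma
    have hhole : ∀ u x, (gridGraph n).Adj u x → u ∈ Fof C → x ∉ Fof C → u ∈ C := by
      intro u x hadj huF hxF
      have hxD : x ∈ D := not_not.1 (fun h => hxF ((hmemF x).2 h))
      by_contra huC
      exact (hmemF u).1 huF
        (comp_closed hxD (Finset.mem_sdiff.2 ⟨Finset.mem_univ _, huC⟩) hadj.symm)
    -- any component of the complement of C has a neighbour in C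
    have hadjC : ∀ u, u ∉ C →
        ∃ a ∈ comp n (Finset.univ \ C) u, ∃ b ∈ C, (gridGraph n).Adj a b := by
      intro u huC
      by_contra hno
      push_neg at hno
      have hcl : ∀ a ∈ comp n (Finset.univ \ C) u, ∀ b, (gridGraph n).Adj a b →
          b ∈ comp n (Finset.univ \ C) u := by
        intro a ha b hadj
        by_cases hbC : b ∈ C
        · exact absurd hadj (hno a ha b hbC)
        · exact comp_closed ha (Finset.mem_sdiff.2 ⟨Finset.mem_univ _, hbC⟩) hadj
      have hvmem : v ∈ comp n (Finset.univ \ C) u :=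
        mem_of_closed hcl (mem_comp_self (Finset.mem_sdiff.2 ⟨Finset.mem_univ _, huC⟩))
      exact (Finset.mem_sdiff.1 (comp_subset hvmem)).2 hvC
    obtain ⟨a₁, ha₁D, b₁, hb₁C, hadj₁⟩ := hadjC w hwnotC
    have ha₁notF : a₁ ∉ Fof C := fun h => (hmemF a₁).1 h ha₁D
    -- connectivity of Fof C with hub v
    have hFconn : ∀ u ∈ Fof C, Rch n (Fof C) v u := by
      intro u huF
      by_cases huC : u ∈ C
      · exact Rch.mono' hCF (hCv ▸ rch_comp_hub (hCv ▸ huC : u ∈ comp n B v))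
      · have huH : u ∈ comp n (Finset.univ \ C) u :=
          mem_comp_self (Finset.mem_sdiff.2 ⟨Finset.mem_univ _, huC⟩)
        have hHD : ∀ x ∈ comp n (Finset.univ \ C) u, x ∉ D := by
          intro x hxH hxD
          have h1 := comp_eq_of_mem (Finset.mem_sdiff.2 ⟨Finset.mem_univ _, huC⟩) hxH
          have h2 := comp_eq_of_mem hwC hxD
          have : u ∈ D := by rw [hDdef, ← h2, h1]; exact huH
          exact (hmemF u).1 huF this
        have hHF : comp n (Finset.univ \ C) u ⊆ Fof C := fun x hx => (hmemF x).2 (hHD x hx)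
        obtain ⟨a, haH, b, hbC, hadj⟩ := hadjC u huC
        have r1 : Rch n (Fof C) v b := Rch.mono' hCF (hCv ▸ rch_comp_hub (hCv ▸ hbC : b ∈ comp n B v))
        have r2 : Rch n (Fof C) b a := Relation.ReflTransGen.single ⟨hCF hbC, hHF haH, hadj.symm⟩
        have r3 : Rch n (Fof C) a u := Rch.mono' hHF (Rch.symm' (rch_comp_hub haH))
        exact (r1.trans r2).trans r3
    have hconn1 : ((gridGraph n).induce ((Fof C : Set (Fin n × Fin n)))).Connected :=
      connected_of_hub (hCF hvC) hFconn
    have hcompl : ((Fof C : Set (Fin n × Fin n)))ᶜ = (D : Set (Fin n × Fin n)) := by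
      rw [hFofC]; ext x; simp
    have hconn2 : ((gridGraph n).induce ((↑(Fof C) : Set (Fin n × Fin n))ᶜ)).Connected := by
      rw [hcompl]
      exact connected_of_hub (mem_comp_self hwC) (fun u hu => rch_comp_hub hu)
    have hside_sub_D : ∀ x, sideP n k₀ x → x ∈ D := by
      intro x hx
      have hxm : x ∈ Finset.univ \ C :=
        Finset.mem_sdiff.2 ⟨Finset.mem_univ _, fun h => hk₀ x h hx⟩
      exact Finset.mem_filter.2 ⟨hxm,
        side_conn (fun z hz => Finset.mem_sdiff.2 ⟨Finset.mem_univ _, fun h => hk₀ z h hz⟩)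
          hwside hx⟩
    have hnot6F : ¬ Type6 n (Fof C) := by
      intro h6
      obtain ⟨x, hxF, hxs⟩ := type6_iff.1 h6 k₀
      exact (hmemF x).1 hxF (hside_sub_D x hxs)
    have hbadF : IsBad n y X (Fof C) := by
      apply bad_of_flip y hy X hX Yh hmax
      intro a b hadj haF hbF
      have haC : a ∈ C := hhole a b hadj haF hbF
      have haB : a ∈ B := (hcompOf C hC).1 haC
      have hbB : b ∉ B := by
        intro hbB
        exact hbF (hCF ((hcompOf C hC).2.2 a haC b hbB hadj))
      constructor
      · have h1 : Yh a ≠ y a := by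
          rw [hB] at haB; exact (Finset.mem_filter.1 haB).2
        rcases hmax.1 a with h2 | h2 <;> rcases hy a with h3 | h3 <;> omega
      · have h1 : ¬ (Yh b ≠ y b) := fun hne => hbB (hB ▸ Finset.mem_filter.2 ⟨Finset.mem_univ _, hne⟩)
        exact not_not.1 h1
    exact ⟨hCF, ⟨hconn1, hconn2, hnot6F⟩, hbadF, hhole, b₁, a₁, hb₁C, ha₁notF, hadj₁.symm⟩
  -- decomposition of B into components
  have hcover : B = 𝒞.biUnion id := by
    ext x
    simp only [Finset.mem_biUnion, id]
    constructor
    · intro hx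
      exact ⟨comp n B x, Finset.mem_image_of_mem _ hx, mem_comp_self hx⟩
    · rintro ⟨C, hC, hxC⟩
      obtain ⟨v, hv, rfl⟩ := Finset.mem_image.1 hC
      exact comp_subset hxC
  have hcard : B.card = ∑ C ∈ 𝒞, C.card := by
    rw [hcover]
    exact Finset.card_biUnion (by
      intro C₁ h₁ C₂ h₂ hne
      obtain ⟨v₁, hv₁, rfl⟩ := Finset.mem_image.1 h₁
      obtain ⟨v₂, hv₂, rfl⟩ := Finset.mem_image.1 h₂
      simp only [Function.onFun, id]
      rw [Finset.disjoint_left]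
      intro x hx₁ hx₂
      exact hne ((comp_eq_of_mem hv₁ hx₁).symm.trans (comp_eq_of_mem hv₂ hx₂)))
  have hinj : ∀ C₁ ∈ 𝒞, ∀ C₂ ∈ 𝒞, Fof C₁ = Fof C₂ → C₁ = C₂ := by
    intro C₁ h₁ C₂ h₂ heq
    obtain ⟨hsub₁, _, _, _, a, b, haC₁, hbF, hadj⟩ := main C₁ h₁
    obtain ⟨_, _, _, hhole₂, _⟩ := main C₂ h₂
    have haC₂ : a ∈ C₂ := hhole₂ a b hadj (heq ▸ hsub₁ haC₁) (heq ▸ hbF)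
    obtain ⟨v₁, hv₁, rfl⟩ := Finset.mem_image.1 h₁
    obtain ⟨v₂, hv₂, rfl⟩ := Finset.mem_image.1 h₂
    exact (comp_eq_of_mem hv₁ haC₁).symm.trans (comp_eq_of_mem hv₂ haC₂)
  calc B.card = ∑ C ∈ 𝒞, C.card := hcard
    _ ≤ ∑ C ∈ 𝒞, (Fof C).card :=
        Finset.sum_le_sum (fun C hC => Finset.card_le_card (main C hC).1)
    _ = ∑ F' ∈ 𝒞.image Fof, F'.card := (Finset.sum_image hinj).symm
    _ ≤ ∑ F ∈ univ.filter (fun F : Finset (Fin n × Fin n) =>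
        InFamily n F ∧ IsBad n y X F), F.card := by
        apply Finset.sum_le_sum_of_subset
        intro F' hF'
        obtain ⟨C, hC, rfl⟩ := Finset.mem_image.1 hF'
        exact Finset.mem_filter.2 ⟨Finset.mem_univ _, (main C hC).2.1, (main C hC).2.2.1⟩
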